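/- Let σ : R → R be the unique ring automorphism with σ(X) = Y, σ(Y) = X and σ(Z) = Z. There is a σ-semilinear bijection φ : A → A* (i.e., φ is additive, φ(r·u) = σ(r)·φ(u), and bijective) determined by φ(v₊) = v₋* and φ(v₋) = v₊*, and it intertwines the operations of A with the dual operations of A*: for all i, j ∈ {+,−}, φ(μ(v_i ⊗ v_j)) = Δ*(φ(v_i) ⊗ φ(v_j)), and, writing Δ(v_i) = Σ_t r_t · (v_{a_t} ⊗ v_{b_t}) with r_t ∈ R, μ*(φ(v_i)) = Σ_t σ(r_t) · (φ(v_{a_t}) ⊗ φ(v_{b_t})). -/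

import Mathlib

open scoped TensorProduct

noncomputable section Chrono

/-- The abelian group (ℤ/2)×(ℤ/2)×ℤ. -/
abbrev GG : Type := ZMod 2 × ZMod 2 × ℤ

/-- The ring R = ℤ[X,Y,Z,Z⁻¹]/(X²−1, Y²−1), realized as the group algebra over ℤ
of the abelian group (ℤ/2)×(ℤ/2)×ℤ. -/
abbrev RR : Type := AddMonoidAlgebra ℤ GG

/-- The unit of `RR` corresponding to a group element of `GG`. -/
def gunit (g : GG) : RRˣ where
  val := AddMonoidAlgebra.single g 1
  inv := AddMonoidAlgebra.single (-g) 1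
  val_inv := by simp [AddMonoidAlgebra.single_mul_single, AddMonoidAlgebra.one_def]
  inv_val := by simp [AddMonoidAlgebra.single_mul_single, AddMonoidAlgebra.one_def]

/-- The unit X of R (image of the first generator). -/
def Xu : RRˣ := gunit (1, 0, 0)
/-- The unit Y of R (image of the second generator). -/
def Yu : RRˣ := gunit (0, 1, 0)
/-- The unit Z of R (image of the third generator). -/
def Zu : RRˣ := gunit (0, 0, 1)

def X : RR := Xu
def Y : RR := Yu
def Z : RR := Zu

/-- ℤ_π = ℤ[π]/(π²−1). -/
abbrev Zpi : Type := Polynomial ℤ ⧸ Ideal.span {(Polynomial.X : Polynomial ℤ) ^ 2 - 1}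

/-- The class of π in ℤ_π. -/
def piE : Zpi := Ideal.Quotient.mk _ Polynomial.X

/-- The homogeneous component of degree `(a,b) ∈ (ℤ/2)×ℤ` of the splitting-degree grading
of `RR`: the ℤ-submodule spanned by the monomials `X^p Y^q Z^r` with `p+q ≡ a (mod 2)`
and `r = -b`. -/
def Rcomp (d : ZMod 2 × ℤ) : Submodule ℤ RR :=
  Submodule.span ℤ {m : RR | ∃ p q r : ℤ,
    ((p + q : ℤ) : ZMod 2) = d.1 ∧ r = -d.2 ∧ m = ((Xu ^ p * Yu ^ q * Zu ^ r : RRˣ) : RR)}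

/-- λ((a,b),(a',b')) = X^{aa'} · Y^{bb'} · Z^{ab'−a'b} ∈ Rˣ. -/
def lam (d e : ℤ × ℤ) : RRˣ :=
  Xu ^ (d.1 * e.1) * Yu ^ (d.2 * e.2) * Zu ^ (d.1 * e.2 - e.1 * d.2)

/-- The free `RR`-module A with basis `v₊ = (1,0)`, `v₋ = (0,1)`. -/
abbrev A : Type := RR × RR

/-- The basis element v₊ of A. -/
def vp : A := (1, 0)
/-- The basis element v₋ of A. -/
def vm : A := (0, 1)

/-- Multiplication μ : A ⊗ A → A, determined by μ(v₊⊗v₊)=v₊, μ(v₊⊗v₋)=v₋,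
μ(v₋⊗v₊)=XZ·v₋, μ(v₋⊗v₋)=0. -/
def mu : A ⊗[RR] A →ₗ[RR] A :=
  TensorProduct.lift <| LinearMap.mk₂ RR
    (fun u v => (u.1 * v.1, u.1 * v.2 + (X * Z) * (u.2 * v.1)))
    (by intros; simp [Prod.ext_iff]; constructor <;> ring)
    (by intros; simp [Prod.ext_iff, smul_eq_mul]; constructor <;> ring)
    (by intros; simp [Prod.ext_iff]; constructor <;> ring)
    (by intros; simp [Prod.ext_iff, smul_eq_mul]; constructor <;> ring)

/-- Comultiplication Δ : A → A ⊗ A, with Δ(v₊) = v₋⊗v₊ + YZ·(v₊⊗v₋) and Δ(v₋) = v₋⊗v₋. -/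
def Delta : A →ₗ[RR] A ⊗[RR] A :=
  (LinearMap.fst RR RR RR).smulRight (vm ⊗ₜ[RR] vp + (Y * Z) • (vp ⊗ₜ[RR] vm)) +
  (LinearMap.snd RR RR RR).smulRight (vm ⊗ₜ[RR] vm)

/-- Counit ε : A → R, ε(v₊)=0, ε(v₋)=1. -/
def eps : A →ₗ[RR] RR := LinearMap.snd RR RR RR

/-- Unit η : R → A, η(1)=v₊. -/
def eta : RR →ₗ[RR] A := (LinearMap.id : RR →ₗ[RR] RR).smulRight vp

/-- The dual basis element v₊* of A* = Hom_R(A,R). -/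
def vpd : Module.Dual RR A := LinearMap.fst RR RR RR
/-- The dual basis element v₋* of A* = Hom_R(A,R). -/
def vmd : Module.Dual RR A := LinearMap.snd RR RR RR

/-- The element f ⊗ g of (A⊗A)* under the identification (A⊗A)* ≅ A*⊗A*,
given by ⟨f⊗g, m⊗n⟩ = f(m)·g(n). -/
def pairF (f g : Module.Dual RR A) : A ⊗[RR] A →ₗ[RR] RR :=
  TensorProduct.lift <| LinearMap.mk₂ RR (fun m n => f m * g n)
    (by intros; simp [add_mul])
    (by intros; simp [smul_eq_mul]; ring)
    (by intros; simp [mul_add])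
    (by intros; simp [smul_eq_mul]; ring)
/-- The basis vector of A indexed by a sign (`true` = +, `false` = −). -/
def vb (i : Bool) : A := if i then vp else vm
/-- The dual basis vector of A* indexed by a sign. -/
def vbd (i : Bool) : Module.Dual RR A := if i then vpd else vmd

/-- The swap of the first two coordinates of `GG`. -/
def swapGG : GG ≃+ GG where
  toFun p := (p.2.1, p.1, p.2.2)
  invFun p := (p.2.1, p.1, p.2.2)
  left_inv _ := rfl
  right_inv _ := rfl
  map_add' _ _ := rfl

/-- σ : swap X and Y. -/
def sig : RR ≃+* RR := (AddMonoidAlgebra.domCongr ℤ ℤ swapGG).toRingEquiv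

lemma sig_single (g : GG) : sig (AddMonoidAlgebra.single g 1) =
    AddMonoidAlgebra.single (swapGG g) 1 := AddMonoidAlgebra.domCongr_single (R := ℤ) (A := ℤ) swapGG g 1

lemma sig_X : sig X = Y := sig_single (1, 0, 0)
lemma sig_Y : sig Y = X := sig_single (0, 1, 0)
lemma sig_Z : sig Z = Z := sig_single (0, 0, 1)

/-- φ : A → A*. -/
def phi (u : A) : Module.Dual RR A := sig u.2 • vpd + sig u.1 • vmd

lemma mu_tmul (u v : A) : mu (u ⊗ₜ[RR] v) =
    (u.1 * v.1, u.1 * v.2 + (X * Z) * (u.2 * v.1)) := rfl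

lemma Delta_apply (u : A) : Delta u =
    u.1 • (vm ⊗ₜ[RR] vp + (Y * Z) • (vp ⊗ₜ[RR] vm)) + u.2 • (vm ⊗ₜ[RR] vm) := rfl

lemma pairF_tmul (f g : Module.Dual RR A) (m n : A) :
    pairF f g (m ⊗ₜ[RR] n) = f m * g n := rfl

lemma dual_decomp (f : Module.Dual RR A) : f = f vp • vpd + f vm • vmd := by
  apply LinearMap.ext
  rintro ⟨a, b⟩
  have h : (a, b) = a • vp + b • vm := by simp [vp, vm, Prod.ext_iff]
  rw [h, map_add, map_smul, map_smul]
  simp [vpd, vmd, vp, vm, smul_eq_mul]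
  ring

lemma dual_ext {f g : Module.Dual RR A} (h1 : f vp = g vp) (h2 : f vm = g vm) :
    f = g := by
  rw [dual_decomp f, dual_decomp g, h1, h2]

set_option maxHeartbeats 2000000 in
/-- Let σ : R → R be the (unique) ring automorphism with σ(X) = Y,
σ(Y) = X, σ(Z) = Z. There is a σ-semilinear bijection φ : A → A* with φ(v₊) = v₋*,
φ(v₋) = v₊*, intertwining μ with Δ* and Δ with μ*: for all i, j ∈ {+,−},
φ(μ(v_i ⊗ v_j)) = Δ*(φ(v_i) ⊗ φ(v_j)), and (applying σ to the structure constants of Δ)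
μ*(φ(v₊)) = φ(v₋)⊗φ(v₊) + σ(YZ)·φ(v₊)⊗φ(v₋) and μ*(φ(v₋)) = φ(v₋)⊗φ(v₋). -/
theorem stmt14 :
    ∃ σ : RR ≃+* RR, σ X = Y ∧ σ Y = X ∧ σ Z = Z ∧
      ∃ φ : A → Module.Dual RR A,
        (∀ u v : A, φ (u + v) = φ u + φ v) ∧
        (∀ (r : RR) (u : A), φ (r • u) = σ r • φ u) ∧
        Function.Bijective φ ∧
        φ vp = vmd ∧ φ vm = vpd ∧
        (∀ i j : Bool,
          φ (mu (vb i ⊗ₜ[RR] vb j)) = (pairF (φ (vb i)) (φ (vb j))).comp Delta) ∧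
        ((φ vp).comp mu = pairF (φ vm) (φ vp) + σ (Y * Z) • pairF (φ vp) (φ vm)) ∧
        ((φ vm).comp mu = pairF (φ vm) (φ vm)) := by
  refine ⟨sig, sig_X, sig_Y, sig_Z, phi, ?_, ?_, ?_, ?_, ?_, ?_, ?_, ?_⟩
  · intro u v; simp [phi, map_add, add_smul]; abel
  · intro r u; simp [phi, map_mul, mul_smul, smul_add]
  · constructor
    · intro u v h
      have h1 := congrArg (fun f => sig.symm (f vp)) h
      have h2 := congrArg (fun f => sig.symm (f vm)) h
      simp [phi, vpd, vmd, vp, vm] at h1 h2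
      exact Prod.ext h2 h1
    · intro f
      refine ⟨(sig.symm (f vm), sig.symm (f vp)), ?_⟩
      rw [dual_decomp f]
      simp [phi, vpd, vmd, vp, vm]
  · simp [phi, vp, map_one, map_zero]
  · simp [phi, vm, map_one, map_zero]
  · intro i j
    apply dual_ext <;>
    cases i <;> cases j <;>
      simp [phi, vb, vp, vm, vpd, vmd, mu_tmul, Delta_apply, pairF_tmul,
        sig_X, sig_Y, sig_Z, map_mul, smul_eq_mul]
  · apply TensorProduct.ext'
    rintro ⟨a, b⟩ ⟨c, d⟩
    simp [phi, vp, vm, vpd, vmd, mu_tmul, pairF_tmul, sig_X, sig_Y, sig_Z,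
      map_mul, map_one, map_zero, smul_eq_mul]
    try ring
  · apply TensorProduct.ext'
    rintro ⟨a, b⟩ ⟨c, d⟩
    simp [phi, vp, vm, vpd, vmd, mu_tmul, pairF_tmul, map_one, map_zero, smul_eq_mul]


end Chrono
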